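/- Let φ: 𝔾_m → ℙⁿ_ℂ be a non-constant morphism whose image avoids hyperplanes H₁, …, H_r and is not contained in any hyperplane. Suppose linear forms L_{i₁}, …, L_{i_m} defining some of the Hᵢ are linearly dependent with m minimal. Then the functions φ_j = (L_{i_j}/L_{i_m}) ∘ φ, j = 1, …, m, are nowhere-vanishing regular functions on 𝔾_m, hence of the form c_j t^{n_j} with c_j ∈ ℂ*, and minimality forces the exponents n_j to be pairwise distinct, contradicting the linear dependence. Conclude: if the complement of hyperplanes H₁, …, H_r in ℙⁿ admits a non-constant map from 𝔾_m, then some line in ℙⁿ meets H₁ ∪ ⋯ ∪ H_r in at most two points. -/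

import Mathlib

lemma laurent_aux (S : Finset ℤ) (b : ℤ → ℂ)
    (hb : ∀ t : ℂˣ, (∑ m ∈ S, b m * (t : ℂ) ^ m) ≠ 0) :
    ∃ (a : ℂ) (m₀ : ℤ), a ≠ 0 ∧ ∀ t : ℂˣ, (∑ m ∈ S, b m * (t : ℂ) ^ m) = a * (t : ℂ) ^ m₀ := by
  classical
  set T : Finset ℤ := S.filter (fun m => b m ≠ 0) with hT
  have hsum : ∀ t : ℂˣ, (∑ m ∈ S, b m * (t : ℂ) ^ m) = ∑ m ∈ T, b m * (t : ℂ) ^ m := by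
    intro t
    rw [hT, Finset.sum_filter_of_ne]
    intro m _ h
    exact fun hb0 => h (by simp [hb0])
  have hTne : T.Nonempty := by
    by_contra h
    rw [Finset.not_nonempty_iff_eq_empty] at h
    have := hb 1
    rw [hsum 1, h] at this
    simp at this
  set m₀ := T.min' hTne with hm₀
  have hm₀T : m₀ ∈ T := T.min'_mem hTne
  have hb₀ : b m₀ ≠ 0 := (Finset.mem_filter.1 hm₀T).2
  set P : Polynomial ℂ := ∑ m ∈ T, Polynomial.C (b m) * Polynomial.X ^ (m - m₀).toNat with hP
  have hle : ∀ m ∈ T, m₀ ≤ m := fun m hm => T.min'_le m hm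
  have heval : ∀ t : ℂˣ, P.eval (t : ℂ) = ∑ m ∈ T, b m * (t : ℂ) ^ ((m - m₀).toNat) := by
    intro t; simp [hP, Polynomial.eval_finset_sum]
  have hkey : ∀ t : ℂˣ, (∑ m ∈ S, b m * (t : ℂ) ^ m) = (t : ℂ) ^ m₀ * P.eval (t : ℂ) := by
    intro t
    rw [hsum t, heval t, Finset.mul_sum]
    apply Finset.sum_congr rfl
    intro m hm
    have h1 : ((m - m₀).toNat : ℤ) = m - m₀ := Int.toNat_of_nonneg (by linarith [hle m hm])
    rw [← zpow_natCast (t : ℂ), h1, ← mul_assoc, mul_comm ((t:ℂ)^m₀) (b m), mul_assoc,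
      ← zpow_add₀ (t.ne_zero)]
    ring_nf
  have heval0 : P.eval 0 = b m₀ := by
    rw [hP]
    simp only [Polynomial.eval_finset_sum, Polynomial.eval_mul, Polynomial.eval_C,
      Polynomial.eval_pow, Polynomial.eval_X]
    rw [Finset.sum_eq_single m₀]
    · simp
    · intro m hm hne
      have : 0 < (m - m₀).toNat := by
        have := hle m hm
        omega
      rw [zero_pow (by omega)]
      ring
    · intro h; exact absurd hm₀T h
  have hnoroot : ∀ z : ℂ, P.eval z ≠ 0 := by
    intro z
    rcases eq_or_ne z 0 with rfl | hz
    · rw [heval0]; exact hb₀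
    · intro h0
      have := hb (Units.mk0 z hz)
      rw [hkey (Units.mk0 z hz)] at this
      simp [h0] at this
  have hdeg : P.degree ≤ 0 := by
    by_contra h
    push_neg at h
    obtain ⟨z, hz⟩ := Complex.exists_root h
    exact hnoroot z hz
  have hPC : P = Polynomial.C (P.coeff 0) := Polynomial.eq_C_of_degree_le_zero hdeg
  have hc0 : P.coeff 0 = b m₀ := by
    have := heval0
    rw [hPC] at this
    simpa using this
  refine ⟨b m₀, m₀, hb₀, fun t => ?_⟩
  rw [hkey t, hPC, Polynomial.eval_C, hc0, mul_comm]


noncomputable def u2 : ℂˣ := Units.mk0 2 two_ne_zero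

noncomputable def gAux {M : Type*} [AddCommGroup M] [Module ℂ M] (v : ℂˣ → M) :
    List ℤ → ℂˣ → M
  | [], t => v t
  | (e :: l), t => gAux v l (u2 * t) - ((2 : ℂ) ^ e) • gAux v l t

lemma gAux_mem_span {M : Type*} [AddCommGroup M] [Module ℂ M] (v : ℂˣ → M)
    (l : List ℤ) (t : ℂˣ) : gAux v l t ∈ Submodule.span ℂ (Set.range v) := by
  induction l generalizing t with
  | nil => exact Submodule.subset_span ⟨t, rfl⟩
  | cons e l ih =>
    exact Submodule.sub_mem _ (ih (u2 * t)) (Submodule.smul_mem _ _ (ih t))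

lemma gAux_apply {M : Type*} [AddCommGroup M] [Module ℂ M] (v : ℂˣ → M)
    (φ : M →ₗ[ℂ] ℂ) (a : ℂ) (m : ℤ) (h : ∀ t : ℂˣ, φ (v t) = a * (t : ℂ) ^ m)
    (l : List ℤ) (t : ℂˣ) :
    φ (gAux v l t) = a * (l.map (fun e => (2 : ℂ) ^ m - (2 : ℂ) ^ e)).prod * (t : ℂ) ^ m := by
  induction l generalizing t with
  | nil => simpa [gAux] using h t
  | cons e l ih =>
    have h2t : ((u2 * t : ℂˣ) : ℂ) ^ m = (2 : ℂ) ^ m * (t : ℂ) ^ m := by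
      rw [Units.val_mul, mul_zpow]
      norm_num [u2]
    simp only [gAux, map_sub, map_smul, ih, List.map_cons, List.prod_cons, h2t, smul_eq_mul]
    ring

lemma two_zpow_inj : Function.Injective (fun m : ℤ => (2 : ℂ) ^ m) := by
  intro m1 m2 h
  have : (2 : ℝ) ^ m1 = (2 : ℝ) ^ m2 := by
    have h2 : ((2 : ℝ) : ℂ) = (2 : ℂ) := by norm_cast
    have h' : ((2 : ℝ) ^ m1 : ℂ) = ((2 : ℝ) ^ m2 : ℂ) := by
      rw [h2]
      exact h
    exact_mod_cast h' 
  exact zpow_right_injective₀ (by norm_num) (by norm_num) this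

/- STATEMENT 10 (the concluding claim). A morphism `φ : 𝔾_m → ℙⁿ_ℂ` is given by Laurent
polynomials: homogeneous coordinates `f i : ℂˣ → ℂ` of the form `t ↦ Σ_m c_{i,m} t^m`
(finitely many nonzero `c_{i,m}`, `m ∈ ℤ`), never simultaneously zero.  The hyperplanes
`H_j` are cut out by nonzero linear forms `L_j` on `ℂ^{n+1}`.  If the image of `φ` avoids
all the `H_j` and `φ` is non-constant (the coordinate vectors at two points are not
proportional), then some line in `ℙⁿ` (the projectivization of a 2-dimensional subspace
`W`) meets `H₁ ∪ ⋯ ∪ H_r` in at most two points. -/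
theorem stmt_10 (n r : ℕ) (L : Fin r → ((Fin (n + 1) → ℂ) →ₗ[ℂ] ℂ)) (hL : ∀ j, L j ≠ 0)
    (c : Fin (n + 1) → (ℤ →₀ ℂ))
    (f : Fin (n + 1) → ℂˣ → ℂ)
    (hf : ∀ i t, f i t = (c i).sum fun m a => a * (t : ℂ) ^ m)
    (hne : ∀ t : ℂˣ, (fun i => f i t) ≠ 0)
    (havoid : ∀ (t : ℂˣ) (j : Fin r), L j (fun i => f i t) ≠ 0)
    (hnonconst : ∃ t t' : ℂˣ, ∀ a : ℂ, (fun i => f i t') ≠ a • fun i => f i t) :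
    ∃ W : Submodule ℂ (Fin (n + 1) → ℂ), Module.finrank ℂ W = 2 ∧
      ∃ p q : Projectivization ℂ (Fin (n + 1) → ℂ),
        ∀ x : Projectivization ℂ (Fin (n + 1) → ℂ), x.submodule ≤ W →
          (∃ j : Fin r, L j x.rep = 0) → x = p ∨ x = q := by
  classical
  obtain ⟨t₀, t₁, hcon⟩ := hnonconst
  set v : ℂˣ → (Fin (n+1) → ℂ) := fun t i => f i t with hv
  set V : Submodule ℂ (Fin (n+1) → ℂ) := Submodule.span ℂ (Set.range v) with hV
  set S : Finset ℤ := Finset.univ.biUnion (fun i : Fin (n+1) => (c i).support) with hS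
  have hvsum : ∀ t : ℂˣ, v t = ∑ m ∈ S, (t : ℂ) ^ m • (fun i => c i m) := by
    intro t
    funext i
    rw [Finset.sum_apply]
    show f i t = _
    rw [hf i t, Finsupp.sum]
    calc ∑ m ∈ (c i).support, c i m * (t:ℂ) ^ m
        = ∑ m ∈ S, c i m * (t:ℂ) ^ m :=
          Finset.sum_subset
            (fun m hm => Finset.mem_biUnion.2 ⟨i, Finset.mem_univ i, hm⟩)
            (fun m _ hm => by rw [Finsupp.notMem_support_iff.1 hm, zero_mul])
      _ = _ := Finset.sum_congr rfl (fun m _ => by simp [mul_comm])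
  have hLv : ∀ (j : Fin r) (t : ℂˣ),
      L j (v t) = ∑ m ∈ S, (L j (fun i => c i m)) * (t : ℂ) ^ m := by
    intro j t
    rw [hvsum t, map_sum]
    exact Finset.sum_congr rfl (fun m _ => by rw [map_smul, smul_eq_mul, mul_comm])
  have h1 : ∀ j : Fin r, ∃ (a : ℂ) (m₀ : ℤ), a ≠ 0 ∧
      ∀ t : ℂˣ, (∑ m ∈ S, (L j (fun i => c i m)) * (t : ℂ) ^ m) = a * (t : ℂ) ^ m₀ :=
    fun j => laurent_aux S _ (fun t => by rw [← hLv j t]; exact havoid t j)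
  choose a nn ha hval using h1
  have hLval : ∀ (j : Fin r) (t : ℂˣ), L j (v t) = a j * (t : ℂ) ^ (nn j) :=
    fun j t => by rw [hLv j t, hval j t]
  have hprop : ∀ j k : Fin r, nn j = nn k → ∀ x ∈ V, a k * L j x = a j * L k x := by
    intro j k hjk x hx
    have hker : V ≤ LinearMap.ker (a k • L j - a j • L k) := by
      rw [hV]
      apply Submodule.span_le.2
      rintro _ ⟨t, rfl⟩
      simp only [SetLike.mem_coe, LinearMap.mem_ker, LinearMap.sub_apply, LinearMap.smul_apply,
        smul_eq_mul, hLval, hjk]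
      ring
    have := hker hx
    simp only [LinearMap.mem_ker, LinearMap.sub_apply, LinearMap.smul_apply, smul_eq_mul,
      sub_eq_zero] at this
    exact this
  have hmemV : ∀ t : ℂˣ, v t ∈ V := fun t => Submodule.subset_span ⟨t, rfl⟩
  have hvne : ∀ t : ℂˣ, v t ≠ 0 := hne
  have havoid' : ∀ (t : ℂˣ) (j : Fin r), L j (v t) ≠ 0 := havoid
  have hpair01 : ∀ (s t : ℂ), s • v t₀ + t • v t₁ = 0 → s = 0 ∧ t = 0 := by
    intro s t hst
    rcases eq_or_ne t 0 with rfl | ht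
    · rw [zero_smul, add_zero] at hst
      exact ⟨(smul_eq_zero.1 hst).resolve_right (hvne t₀), rfl⟩
    · exfalso
      apply hcon (t⁻¹ * (-s))
      show v t₁ = _
      have h2 : t • v t₁ = (-s) • v t₀ := by
        rw [neg_smul, eq_neg_iff_add_eq_zero]
        exact (add_comm (t • v t₁) (s • v t₀)).trans hst
      have := congrArg (fun y => t⁻¹ • y) h2
      simpa [smul_smul, inv_mul_cancel₀ ht] using this
  rcases Nat.eq_zero_or_pos r with hr | hr
  · -- r = 0
    subst hr
    have hli : LinearIndependent ℂ ![v t₀, v t₁] :=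
      LinearIndependent.pair_iff.2 hpair01
    refine ⟨Submodule.span ℂ (Set.range ![v t₀, v t₁]), ?_,
      Projectivization.mk ℂ (v t₀) (hvne t₀), Projectivization.mk ℂ (v t₀) (hvne t₀), ?_⟩
    · rw [finrank_span_eq_card hli]; simp
    · intro x _ hj
      obtain ⟨j, -⟩ := hj
      exact j.elim0
  · -- r ≥ 1
    set j₀ : Fin r := ⟨0, hr⟩ with hj₀
    set N : ℤ := nn j₀ with hN
    set B : Finset ℤ := (Finset.univ.image nn).erase N with hB
    set w : Fin (n+1) → ℂ := gAux v B.toList t₁ with hw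
    set u : Fin (n+1) → ℂ := v t₀ with hu
    have hwV : w ∈ V := gAux_mem_span v _ t₁
    have huV : u ∈ V := hmemV t₀
    have hwval : ∀ j : Fin r, L j w =
        a j * ((B.toList.map fun e => (2:ℂ)^(nn j) - (2:ℂ)^e).prod) * (t₁:ℂ)^(nn j) :=
      fun j => gAux_apply v (L j) (a j) (nn j) (hLval j) B.toList t₁
    have hwbad : ∀ j : Fin r, nn j ≠ N → L j w = 0 := by
      intro j hj
      have hmem : nn j ∈ B :=
        Finset.mem_erase.2 ⟨hj, Finset.mem_image.2 ⟨j, Finset.mem_univ j, rfl⟩⟩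
      have h0 : (0:ℂ) ∈ (B.toList.map fun e => (2:ℂ)^(nn j) - (2:ℂ)^e) :=
        List.mem_map.2 ⟨nn j, Finset.mem_toList.2 hmem, by ring⟩
      rw [hwval j, List.prod_eq_zero h0, mul_zero, zero_mul]
    have hprodN : ((B.toList.map fun e => (2:ℂ)^N - (2:ℂ)^e).prod) ≠ 0 := by
      apply List.prod_ne_zero
      intro h0
      obtain ⟨e, heB, he⟩ := List.mem_map.1 h0
      have heN : (2:ℂ)^N = (2:ℂ)^e := by
        have := sub_eq_zero.1 he
        exact this
      exact (Finset.ne_of_mem_erase (Finset.mem_toList.1 heB)) (two_zpow_inj heN).symm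
    have hwj₀ : L j₀ w ≠ 0 := by
      rw [hwval j₀]
      exact mul_ne_zero (mul_ne_zero (ha j₀) hprodN) (zpow_ne_zero _ (Units.ne_zero t₁))
    have hwne : w ≠ 0 := fun h => hwj₀ (by rw [h, map_zero])
    have hune : u ≠ 0 := hvne t₀
    have hpair : ∀ (s t : ℂ), s • u + t • w = 0 → s = 0 ∧ t = 0 := by
      rcases B.eq_empty_or_nonempty with hBe | hBne
      · have : w = v t₁ := by rw [hw, hBe, Finset.toList_empty]; rfl
        rw [this]
        exact hpair01
      · obtain ⟨e, heB⟩ := hBne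
        obtain ⟨jb, -, hjb⟩ := Finset.mem_image.1 (Finset.mem_of_mem_erase heB)
        have hjbN : nn jb ≠ N := by rw [hjb]; exact Finset.ne_of_mem_erase heB
        have hLjbw : L jb w = 0 := hwbad jb hjbN
        intro s t hst
        have h2 := congrArg (L jb) hst
        rw [map_add, map_smul, map_smul, hLjbw, smul_zero, add_zero, map_zero,
          smul_eq_mul] at h2
        have hs : s = 0 := by
          rcases mul_eq_zero.1 h2 with h | h
          · exact h
          · exact absurd h (havoid' t₀ jb)
        subst hs
        rw [zero_smul, zero_add] at hst
        exact ⟨rfl, (smul_eq_zero.1 hst).resolve_right hwne⟩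
    have hli : LinearIndependent ℂ ![u, w] := LinearIndependent.pair_iff.2 hpair
    set W : Submodule ℂ (Fin (n+1) → ℂ) := Submodule.span ℂ (Set.range ![u, w]) with hW
    have hrange : Set.range ![u, w] = {u, w} := by
      simp only [Matrix.range_cons, Matrix.range_empty, Set.union_empty,
        Set.union_singleton]
      exact Set.pair_comm w u
    have hWV : W ≤ V := by
      rw [hW, Submodule.span_le, hrange]
      rintro x (rfl | rfl)
      · exact huV
      · exact hwV
    set A : ℂ := L j₀ u with hA
    set Bw : ℂ := L j₀ w with hBw
    have hAne : A ≠ 0 := havoid' t₀ j₀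
    set z : Fin (n+1) → ℂ := Bw • u - A • w with hz
    have hzne : z ≠ 0 := by
      intro h
      have h2 : Bw • u + (-A) • w = 0 := by
        rw [neg_smul, ← sub_eq_add_neg, ← hz, h]
      have := (hpair _ _ h2).2
      exact hAne (neg_eq_zero.1 this)
    refine ⟨W, ?_, Projectivization.mk ℂ w hwne, Projectivization.mk ℂ z hzne, ?_⟩
    · rw [hW, finrank_span_eq_card hli]; simp
    · intro x hxW hxj
      obtain ⟨j, hj⟩ := hxj
      have hxrep : x.rep ∈ W := hxW (by
        rw [Projectivization.submodule_eq]
        exact Submodule.mem_span_singleton_self _)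
      have hxV : x.rep ∈ V := hWV hxrep
      rw [hW, hrange] at hxrep
      obtain ⟨α, β, hαβ⟩ := Submodule.mem_span_pair.1 hxrep
      have hrepne := x.rep_nonzero
      rcases eq_or_ne (nn j) N with hgood | hbad
      · -- good hyperplane
        right
        have h2 := hprop j j₀ hgood x.rep hxV
        rw [hj, mul_zero] at h2
        have hL0 : L j₀ x.rep = 0 := by
          rcases mul_eq_zero.1 h2.symm with h | h
          · exact absurd h (ha j)
          · exact h
        have heq : α * A + β * Bw = 0 := by
          rw [← hαβ, map_add, map_smul, map_smul, smul_eq_mul, smul_eq_mul] at hL0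
          rw [← hL0, hA, hBw]
        have hβ : β ≠ 0 := by
          intro h0
          rw [h0, zero_mul, add_zero] at heq
          have hα : α = 0 := (mul_eq_zero.1 heq).resolve_right hAne
          rw [h0, hα, zero_smul, zero_smul, add_zero] at hαβ
          exact hrepne hαβ.symm
        rw [← Projectivization.mk_rep x, Projectivization.mk_eq_mk_iff']
        refine ⟨-β / A, ?_⟩
        rw [hz, ← hαβ]
        funext i
        simp only [Pi.smul_apply, Pi.sub_apply, Pi.add_apply, smul_eq_mul]
        field_simp
        linear_combination (-(u i)) * heq
      · -- bad hyperplane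
        left
        have hLw : L j w = 0 := hwbad j hbad
        have hLu : L j u ≠ 0 := havoid' t₀ j
        have h3 : α * L j u = 0 := by
          have := hj
          rw [← hαβ, map_add, map_smul, map_smul, smul_eq_mul, smul_eq_mul, hLw,
            mul_zero, add_zero] at this
          exact this
        have hα : α = 0 := (mul_eq_zero.1 h3).resolve_right hLu
        rw [hα, zero_smul, zero_add] at hαβ
        rw [← Projectivization.mk_rep x, Projectivization.mk_eq_mk_iff']
        exact ⟨β, hαβ⟩
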